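/- Let k ≥ 3. The graph obtained from Σ^{R}_{k,1} by deleting the vertex b_1 together with the edge between a_1 and b_{k+1} has diameter three, where a_1 is at distance three from c. -/

import Mathlib

/-- The graph `Σ^R_{k,n}` on vertices `a_1,…,a_k` (`Sum.inl`), `b_1,…,b_{k+n}`
(`Sum.inr ∘ Sum.inl`, 0-indexed) and `c` (`Sum.inr (Sum.inr ())`). -/
def sigmaR (k n : ℕ) : SimpleGraph (Fin k ⊕ Fin (k + n) ⊕ Unit) :=
  SimpleGraph.fromRel fun x y =>
    match x, y with
    | Sum.inl _, Sum.inl _ => True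
    | Sum.inr (Sum.inl _), Sum.inr (Sum.inl _) => True
    | Sum.inl i, Sum.inr (Sum.inl j) => (j : ℕ) = (i : ℕ) ∨ ((i : ℕ) < n ∧ (j : ℕ) = k + (i : ℕ))
    | Sum.inr (Sum.inr _), Sum.inr (Sum.inl _) => True
    | _, _ => False

namespace Stmt9Aux

variable {k : ℕ}

lemma pos3 (hk : 3 ≤ k) : 0 < k := by omega

lemma ltk1 : k < k + 1 := by omega

def Hg (k : ℕ) (hk : 3 ≤ k) :
    SimpleGraph ↥{v : Fin k ⊕ Fin (k + 1) ⊕ Unit | v ≠ Sum.inr (Sum.inl 0)} :=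
  ((sigmaR k 1).deleteEdges
      {s(Sum.inl ⟨0, pos3 hk⟩, Sum.inr (Sum.inl ⟨k, ltk1⟩))}).induce
      {v | v ≠ Sum.inr (Sum.inl 0)}

def vA (hk : 3 ≤ k) (i : Fin k) : ↥{v : Fin k ⊕ Fin (k + 1) ⊕ Unit | v ≠ Sum.inr (Sum.inl 0)} :=
  ⟨Sum.inl i, by simp⟩

def vB (hk : 3 ≤ k) (j : Fin (k + 1)) (hj : j ≠ 0) :
    ↥{v : Fin k ⊕ Fin (k + 1) ⊕ Unit | v ≠ Sum.inr (Sum.inl 0)} :=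
  ⟨Sum.inr (Sum.inl j), by simp [hj]⟩

def vC (hk : 3 ≤ k) : ↥{v : Fin k ⊕ Fin (k + 1) ⊕ Unit | v ≠ Sum.inr (Sum.inl 0)} :=
  ⟨Sum.inr (Sum.inr ()), by simp⟩

lemma adjAA (hk : 3 ≤ k) {i j : Fin k} (hij : i ≠ j) :
    (Hg k hk).Adj (vA hk i) (vA hk j) := by
  simp [Hg, vA, sigmaR, SimpleGraph.deleteEdges, hij]

lemma adjBB (hk : 3 ≤ k) {i j : Fin (k + 1)} (hi : i ≠ 0) (hj : j ≠ 0) (hij : i ≠ j) :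
    (Hg k hk).Adj (vB hk i hi) (vB hk j hj) := by
  simp [Hg, vB, sigmaR, SimpleGraph.deleteEdges, hij]

lemma adjAB (hk : 3 ≤ k) {i : Fin k} {j : Fin (k + 1)} (hi : (i : ℕ) ≠ 0)
    (hj : (j : ℕ) = (i : ℕ)) (hj0 : j ≠ 0) :
    (Hg k hk).Adj (vA hk i) (vB hk j hj0) := by
  simp [Hg, vA, vB, sigmaR, SimpleGraph.deleteEdges, hj]
  intro h
  have := congrArg Fin.val h
  simp at this; omega

lemma adjCB (hk : 3 ≤ k) {j : Fin (k + 1)} (hj : j ≠ 0) :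
    (Hg k hk).Adj (vC hk) (vB hk j hj) := by
  simp [Hg, vC, vB, sigmaR, SimpleGraph.deleteEdges]

lemma nbrA0 (hk : 3 ≤ k) (u : ↥{v : Fin k ⊕ Fin (k + 1) ⊕ Unit | v ≠ Sum.inr (Sum.inl 0)})
    (h : (Hg k hk).Adj (vA hk ⟨0, pos3 hk⟩) u) : ∃ i : Fin k, u.1 = Sum.inl i := by
  obtain ⟨u, hu⟩ := u
  match u with
  | Sum.inl i => exact ⟨i, rfl⟩
  | Sum.inr (Sum.inl j) =>
    exfalso
    simp [Hg, vA, sigmaR, SimpleGraph.deleteEdges] at h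
    have hj : j ≠ 0 := by simpa using hu
    have : (j : ℕ) ≠ 0 := fun hh => hj (Fin.ext (by simpa using hh))
    have hjk : (j : ℕ) = k := by omega
    exact h.2 (Fin.ext hjk)
  | Sum.inr (Sum.inr ()) =>
    simp [Hg, vA, sigmaR, SimpleGraph.deleteEdges] at h

lemma notAC (hk : 3 ≤ k) (i : Fin k) : ¬ (Hg k hk).Adj (vA hk i) (vC hk) := by
  simp [Hg, vA, vC, sigmaR, SimpleGraph.deleteEdges]

lemma edist_le_one {V : Type*} {G : SimpleGraph V} {x y : V} (h : x = y ∨ G.Adj x y) :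
    G.edist x y ≤ 1 := by
  rcases h with rfl | h
  · simp [SimpleGraph.edist_self]
  · exact le_of_eq (SimpleGraph.edist_eq_one_iff_adj.mpr h)

lemma edistAA (hk : 3 ≤ k) (i j : Fin k) : (Hg k hk).edist (vA hk i) (vA hk j) ≤ 1 := by
  apply edist_le_one
  by_cases h : i = j
  · exact Or.inl (by rw [h])
  · exact Or.inr (adjAA hk h)

lemma edistBB (hk : 3 ≤ k) (i j : Fin (k + 1)) (hi : i ≠ 0) (hj : j ≠ 0) :
    (Hg k hk).edist (vB hk i hi) (vB hk j hj) ≤ 1 := by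
  apply edist_le_one
  by_cases h : i = j
  · exact Or.inl (by simp [vB, h])
  · exact Or.inr (adjBB hk hi hj h)


lemma one_ne_zero' (hk : 3 ≤ k) : (⟨1, by omega⟩ : Fin (k + 1)) ≠ 0 := by
  simp [Fin.ext_iff]

lemma edistAB (hk : 3 ≤ k) (i : Fin k) (j : Fin (k + 1)) (hj : j ≠ 0) :
    (Hg k hk).edist (vA hk i) (vB hk j hj) ≤ 3 := by
  by_cases hi : (i : ℕ) = 0
  · have h1 : (Hg k hk).edist (vA hk i) (vA hk ⟨1, by omega⟩) ≤ 1 := edistAA hk _ _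
    have h2 : (Hg k hk).edist (vA hk ⟨1, by omega⟩) (vB hk ⟨1, by omega⟩ (one_ne_zero' hk)) ≤ 1 :=
      edist_le_one (Or.inr (adjAB hk (by simp) (by simp) _))
    have h3 : (Hg k hk).edist (vB hk ⟨1, by omega⟩ (one_ne_zero' hk)) (vB hk j hj) ≤ 1 :=
      edistBB hk _ _ _ _
    calc (Hg k hk).edist (vA hk i) (vB hk j hj)
        ≤ _ + _ := SimpleGraph.edist_triangle (v := vA hk ⟨1, by omega⟩)
      _ ≤ _ + (_ + _) := by
          gcongr
          exact SimpleGraph.edist_triangle (v := vB hk ⟨1, by omega⟩ (one_ne_zero' hk))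
      _ ≤ 1 + (1 + 1) := by gcongr
      _ ≤ 3 := by norm_num
  · have hne : (⟨(i : ℕ), by omega⟩ : Fin (k + 1)) ≠ 0 := by simp [Fin.ext_iff, hi]
    have h1 : (Hg k hk).edist (vA hk i) (vB hk ⟨(i : ℕ), by omega⟩ hne) ≤ 1 :=
      edist_le_one (Or.inr (adjAB hk hi rfl _))
    have h2 : (Hg k hk).edist (vB hk ⟨(i : ℕ), by omega⟩ hne) (vB hk j hj) ≤ 1 :=
      edistBB hk _ _ _ _
    calc (Hg k hk).edist (vA hk i) (vB hk j hj)
        ≤ _ + _ := SimpleGraph.edist_triangle (v := vB hk ⟨(i : ℕ), by omega⟩ hne)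
      _ ≤ 1 + 1 := by gcongr
      _ ≤ 3 := by norm_num

lemma edistAC (hk : 3 ≤ k) (i : Fin k) :
    (Hg k hk).edist (vA hk i) (vC hk) ≤ 3 := by
  have h1 : (Hg k hk).edist (vA hk i) (vB hk ⟨1, by omega⟩ (one_ne_zero' hk)) ≤ 2 := by
    by_cases hi : (i : ℕ) = 0
    · have h1 : (Hg k hk).edist (vA hk i) (vA hk ⟨1, by omega⟩) ≤ 1 := edistAA hk _ _
      have h2 : (Hg k hk).edist (vA hk ⟨1, by omega⟩) (vB hk ⟨1, by omega⟩ (one_ne_zero' hk)) ≤ 1 :=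
        edist_le_one (Or.inr (adjAB hk (by simp) (by simp) _))
      calc (Hg k hk).edist (vA hk i) (vB hk ⟨1, by omega⟩ (one_ne_zero' hk))
          ≤ _ + _ := SimpleGraph.edist_triangle (v := vA hk ⟨1, by omega⟩)
        _ ≤ 1 + 1 := by gcongr
        _ ≤ 2 := by norm_num
    · have hne : (⟨(i : ℕ), by omega⟩ : Fin (k + 1)) ≠ 0 := by simp [Fin.ext_iff, hi]
      have h1 : (Hg k hk).edist (vA hk i) (vB hk ⟨(i : ℕ), by omega⟩ hne) ≤ 1 :=
        edist_le_one (Or.inr (adjAB hk hi rfl _))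
      have h2 : (Hg k hk).edist (vB hk ⟨(i : ℕ), by omega⟩ hne)
          (vB hk ⟨1, by omega⟩ (one_ne_zero' hk)) ≤ 1 := edistBB hk _ _ _ _
      calc (Hg k hk).edist (vA hk i) (vB hk ⟨1, by omega⟩ (one_ne_zero' hk))
          ≤ _ + _ := SimpleGraph.edist_triangle (v := vB hk ⟨(i : ℕ), by omega⟩ hne)
        _ ≤ 1 + 1 := by gcongr
        _ ≤ 2 := by norm_num
  have h2 : (Hg k hk).edist (vB hk ⟨1, by omega⟩ (one_ne_zero' hk)) (vC hk) ≤ 1 :=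
    edist_le_one (Or.inr (adjCB hk _).symm)
  calc (Hg k hk).edist (vA hk i) (vC hk)
      ≤ _ + _ := SimpleGraph.edist_triangle (v := vB hk ⟨1, by omega⟩ (one_ne_zero' hk))
    _ ≤ 2 + 1 := by gcongr
    _ ≤ 3 := by norm_num

lemma edist_le_three (hk : 3 ≤ k)
    (x y : ↥{v : Fin k ⊕ Fin (k + 1) ⊕ Unit | v ≠ Sum.inr (Sum.inl 0)}) :
    (Hg k hk).edist x y ≤ 3 := by
  obtain ⟨x, hx⟩ := x
  obtain ⟨y, hy⟩ := y
  match x, y with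
  | Sum.inl i, Sum.inl j =>
    exact le_trans (edistAA hk i j) (by norm_num)
  | Sum.inl i, Sum.inr (Sum.inl j) =>
    exact edistAB hk i j (by simpa using hy)
  | Sum.inl i, Sum.inr (Sum.inr ()) =>
    exact edistAC hk i
  | Sum.inr (Sum.inl i), Sum.inl j =>
    rw [SimpleGraph.edist_comm]
    exact edistAB hk j i (by simpa using hx)
  | Sum.inr (Sum.inl i), Sum.inr (Sum.inl j) =>
    exact le_trans (edistBB hk i j (by simpa using hx) (by simpa using hy)) (by norm_num)
  | Sum.inr (Sum.inl i), Sum.inr (Sum.inr ()) =>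
    rw [SimpleGraph.edist_comm]
    exact le_trans (edist_le_one (Or.inr (adjCB hk (by simpa using hx)))) (by norm_num)
  | Sum.inr (Sum.inr ()), Sum.inl j =>
    rw [SimpleGraph.edist_comm]
    exact edistAC hk j
  | Sum.inr (Sum.inr ()), Sum.inr (Sum.inl j) =>
    exact le_trans (edist_le_one (Or.inr (adjCB hk (by simpa using hy)))) (by norm_num)
  | Sum.inr (Sum.inr ()), Sum.inr (Sum.inr ()) =>
    exact le_trans (edist_le_one (Or.inl rfl)) (by norm_num)


lemma walk_len_ge (hk : 3 ≤ k) (p : (Hg k hk).Walk (vA hk ⟨0, pos3 hk⟩) (vC hk)) :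
    3 ≤ p.length := by
  cases p with
  | @cons _ u _ h q =>
    obtain ⟨i, hi⟩ := nbrA0 hk u h
    have hu : u = vA hk i := Subtype.ext hi
    subst hu
    cases q with
    | @cons _ w _ h2 q2 =>
      cases q2 with
      | nil => exact absurd h2 (notAC hk i)
      | cons h3 q3 => simp [SimpleGraph.Walk.length_cons]

def walk3 (hk : 3 ≤ k) : (Hg k hk).Walk (vA hk ⟨0, pos3 hk⟩) (vC hk) :=
  .cons (adjAA hk (i := ⟨0, pos3 hk⟩) (j := ⟨1, by omega⟩) (by simp [Fin.ext_iff]))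
    (.cons (adjAB hk (i := ⟨1, by omega⟩) (j := ⟨1, by omega⟩) (by simp) rfl (one_ne_zero' hk))
      (.cons (adjCB hk (one_ne_zero' hk)).symm .nil))

lemma edistA0C (hk : 3 ≤ k) : (Hg k hk).edist (vA hk ⟨0, pos3 hk⟩) (vC hk) = 3 := by
  apply le_antisymm
  · have := (Hg k hk).edist_le (walk3 hk)
    simpa [walk3] using this
  · rw [SimpleGraph.edist_eq_sInf]
    apply le_sInf
    rintro b ⟨w, rfl⟩
    simp only []
    exact_mod_cast walk_len_ge hk w

lemma distA0C (hk : 3 ≤ k) : (Hg k hk).dist (vA hk ⟨0, pos3 hk⟩) (vC hk) = 3 := by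
  apply le_antisymm
  · have := (Hg k hk).dist_le (walk3 hk)
    simpa [walk3] using this
  · have hr : (Hg k hk).Reachable (vA hk ⟨0, pos3 hk⟩) (vC hk) := ⟨walk3 hk⟩
    obtain ⟨w, hw⟩ := hr.exists_walk_length_eq_dist
    rw [← hw]
    exact walk_len_ge hk w

lemma diamHg (hk : 3 ≤ k) : (Hg k hk).diam = 3 := by
  have hle : (Hg k hk).ediam ≤ 3 := SimpleGraph.ediam_le_of_edist_le (edist_le_three hk)
  have hne : (Hg k hk).ediam ≠ ⊤ := fun h => by simp [h] at hle
  apply le_antisymm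
  · have : (Hg k hk).diam ≤ (3 : ℕ∞).toNat := by
      rw [SimpleGraph.diam]
      exact ENat.toNat_le_toNat hle (by simp)
    simpa using this
  · calc 3 = (Hg k hk).dist (vA hk ⟨0, pos3 hk⟩) (vC hk) := (distA0C hk).symm
      _ ≤ (Hg k hk).diam := SimpleGraph.dist_le_diam hne

end Stmt9Aux

/-- The graph obtained from `Σ^R_{k,1}` by deleting the vertex `b_1` together with the
edge `ε(a_1, b_{k+1})` has diameter three, with `a_1` at distance three from `c`. -/
theorem stmt9 (k : ℕ) (hk : 3 ≤ k) :
    (((sigmaR k 1).deleteEdges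
        {s(Sum.inl ⟨0, by omega⟩, Sum.inr (Sum.inl ⟨k, by omega⟩))}).induce
        {v | v ≠ Sum.inr (Sum.inl 0)}).diam = 3 ∧
    ∀ x y : ({v : Fin k ⊕ Fin (k + 1) ⊕ Unit | v ≠ Sum.inr (Sum.inl 0)} : Set _),
      (x : Fin k ⊕ Fin (k + 1) ⊕ Unit) = Sum.inl ⟨0, by omega⟩ →
      (y : Fin k ⊕ Fin (k + 1) ⊕ Unit) = Sum.inr (Sum.inr ()) →
      (((sigmaR k 1).deleteEdges
          {s(Sum.inl ⟨0, by omega⟩, Sum.inr (Sum.inl ⟨k, by omega⟩))}).induce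
          {v | v ≠ Sum.inr (Sum.inl 0)}).dist x y = 3 := by
  refine ⟨Stmt9Aux.diamHg hk, ?_⟩
  intro x y hx hy
  have hx' : x = Stmt9Aux.vA hk ⟨0, by omega⟩ := Subtype.ext hx
  have hy' : y = Stmt9Aux.vC hk := Subtype.ext hy
  rw [hx', hy']
  exact Stmt9Aux.distA0C hk
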